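/- For the fast-growing hierarchy relative to f (defined via one-step computation K_f on pairs (σ, x) of a finite sequence of ordinal notations below ε₀ and a natural number), the associated ordinal h(σ,x) = ω^{σ₀} + ⋯ + ω^{σ_n} (natural/ordinary sum along the stack, h(⟨⟩,x)=0) strictly decreases at each computation step as long as it is positive: if h(K_f(σ,x)) is defined and h(σ,x) > 0, then h(σ,x) > h(K_f(σ,x)). -/

import Mathlib

open Ordinal

/-- One step `K_f` of the canonical computation of the fast-growing hierarchy
relative to `f`, on a stack of ordinal notations below `ε₀` (head = topmost
entry `α_n`) together with a natural number argument:
`K_f(α₀…α_n, x) = (α₀…α_{n-1}, f(x))` if `α_n = 0`;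
`(α₀…α_{n-1} β…β (x+1 copies), 1)` if `α_n = β+1`;
`(α₀…α_{n-1} α_n[x], x)` if `α_n` is a limit; and `K_f(⟨⟩, x) = (⟨⟩, x)`. -/
def Kstep (f : ℕ → ℕ) : List ONote × ℕ → List ONote × ℕ
  | ([], x) => ([], x)
  | (α :: rest, x) =>
    match α.fundamentalSequence with
    | Sum.inl none => (rest, f x)
    | Sum.inl (some β) => (List.replicate (x + 1) β ++ rest, 1)
    | Sum.inr g => (g x :: rest, x)

/-- The ordinal `h(α₀…α_n, x) = ω^{α₀} + ⋯ + ω^{α_n}` associated to a stack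
(head of the list is the topmost entry `α_n`); `h(⟨⟩, x) = 0`. -/
noncomputable def hOrd (σ : List ONote) : Ordinal.{0} :=
  σ.foldr (fun α acc => acc + omega0 ^ α.repr) 0

/-- `F_{α,f}(x) = y`: the iteration of the one-step computation `K_f` starting
from `(⟨α⟩, x)` reaches the empty stack with value `y`. -/
def Fval (f : ℕ → ℕ) (α : ONote) (x y : ℕ) : Prop :=
  ∃ l : ℕ, (Kstep f)^[l] ([α], x) = ([], y)

lemma hOrd_cons (α : ONote) (l : List ONote) :
    hOrd (α :: l) = hOrd l + omega0 ^ α.repr := rfl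

lemma hOrd_replicate (n : ℕ) (β : ONote) (l : List ONote) :
    hOrd (List.replicate n β ++ l) = hOrd l + omega0 ^ β.repr * n := by
  induction n with
  | zero => simp [hOrd]
  | succ n ih =>
    rw [List.replicate_succ, List.cons_append, hOrd_cons, ih,
      Nat.cast_succ, mul_add, mul_one, add_assoc]

/-- The associated ordinal strictly decreases at each computation step of `K_f`
as long as it is positive. -/
theorem stmt_15 (f : ℕ → ℕ) (σ : List ONote) (x : ℕ)
    (hNF : ∀ α ∈ σ, α.NF) (hpos : 0 < hOrd σ) :
    hOrd (Kstep f (σ, x)).1 < hOrd σ := by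
  cases σ with
  | nil => simp [hOrd] at hpos
  | cons α rest =>
    have hfs := ONote.fundamentalSequence_has_prop α
    rcases e : α.fundamentalSequence with (⟨⟩ | β) | g <;>
      rw [e] at hfs <;> simp only [Kstep, e, hOrd_cons]
    · -- α = 0 : hOrd rest < hOrd rest + ω ^ 0
      have : (0:Ordinal) < omega0 ^ α.repr := opow_pos _ omega0_pos
      exact lt_add_of_pos_right _ this
    · -- α = succ β
      rw [hOrd_replicate]
      apply (add_lt_add_iff_left _).2
      have h1 : omega0 ^ α.repr = omega0 ^ β.repr * omega0 := by
        rw [hfs.1, ← opow_succ]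
      rw [h1]
      exact mul_lt_mul_of_pos_left (nat_lt_omega0 (x + 1)) (opow_pos _ omega0_pos)
    · -- α limit
      apply (add_lt_add_iff_left _).2
      exact (opow_lt_opow_iff_right one_lt_omega0).2 (ONote.lt_def.1 (hfs.2.1 x).2.1)
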